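/- Let n ≥ 1 be an integer with n ≠ 7 and n ≠ 8. If x ∈ P satisfies ⟨x,x⟩ = 2, then x = e_i − e_j for some indices i ≠ j (i.e., every vector of squared length 2 in the weight lattice of A_n is a root). -/

import Mathlib

private lemma stmt0_core (N r D : ℤ) (hN : 2 ≤ N) (hr0 : 0 ≤ r) (hrN : r < N)
    (h8 : N ≠ 8) (h9 : N ≠ 9) (hD0 : 0 ≤ D) (hDe : Even D)
    (key : N * D = 2 * N + r ^ 2 - N * r) : r = 0 := by
  by_contra hr
  have hr1 : 1 ≤ r := by omega
  rcases eq_or_lt_of_le hD0 with hD | hD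
  · have key0 : N * (r - 2) = r ^ 2 := by rw [← hD] at key; ring_nf at key ⊢; linarith
    have hr3 : 3 ≤ r := by nlinarith
    have hdvd : (r - 2) ∣ 4 := by
      have h1 : (r - 2) ∣ r ^ 2 := ⟨N, by linarith [key0, mul_comm N (r - 2)]⟩
      have h2 : (r - 2) ∣ (r - 2) * (r + 2) := ⟨r + 2, rfl⟩
      have h3 : r ^ 2 - (r - 2) * (r + 2) = 4 := by ring
      have := dvd_sub h1 h2
      rwa [h3] at this
    have hle : r - 2 ≤ 4 := Int.le_of_dvd (by norm_num) hdvd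
    have hle6 : r ≤ 6 := by omega
    interval_cases r <;> revert hdvd key0 <;> norm_num <;> omega
  · have hD2 : 2 ≤ D := by rcases hDe with ⟨k, hk⟩; omega
    have h1 : N * r ≤ N * (D + r - 2) :=
      mul_le_mul_of_nonneg_left (by omega) (by omega)
    have h2 : (r + 1) * r ≤ N * r :=
      mul_le_mul_of_nonneg_right (by omega) (by omega)
    nlinarith [key]

/-- Every vector of squared length 2 in the weight lattice of `A_n`
(`n ≥ 1`, `n ≠ 7`, `n ≠ 8`) is a root `e_i - e_j`. -/
theorem stmt_0 (n : ℕ) (hn : 1 ≤ n) (h7 : n ≠ 7) (h8 : n ≠ 8)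
    (x : Fin (n + 1) → ℝ)
    (hsum : ∑ i, x i = 0)
    (hint : ∀ i j, ∃ m : ℤ, x i - x j = m)
    (hlen : ∑ i, x i ^ 2 = 2) :
    ∃ i j : Fin (n + 1), i ≠ j ∧
      x = Pi.single i (1 : ℝ) - Pi.single j (1 : ℝ) := by
  classical
  choose m hm using hint
  set N : ℤ := (n : ℤ) + 1 with hNdef
  set S : ℤ := ∑ i, m i 0 with hSdef
  set z : Fin (n + 1) → ℤ := fun i => N * m i 0 - S with hzdef
  have hNR : ((n : ℝ) + 1) ≠ 0 := by positivity
  -- (z i : ℝ) = (n+1) * x i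
  have hx0 : ((n : ℝ) + 1) * x 0 + (S : ℝ) = 0 := by
    have h1 : ∑ j, x j = ∑ j, (x 0 + (m j 0 : ℝ)) :=
      Finset.sum_congr rfl fun j _ => by linarith [hm j 0]
    rw [h1, Finset.sum_add_distrib, Finset.sum_const, Finset.card_univ,
      Fintype.card_fin, nsmul_eq_mul] at hsum
    have hScast : (S : ℝ) = ∑ j, (m j 0 : ℝ) := by push_cast [hSdef]; ring
    rw [hScast]
    push_cast at hsum ⊢
    linarith [hsum]
  have hxz : ∀ i, (z i : ℝ) = ((n : ℝ) + 1) * x i := by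
    intro i
    have h1 := hm i 0
    have h2 : (z i : ℝ) = ((n : ℝ) + 1) * (m i 0 : ℝ) - (S : ℝ) := by
      have h3 : z i = N * m i 0 - S := rfl
      rw [h3]; push_cast [hNdef]; ring
    rw [h2, ← h1]
    linarith [hx0]
  have hNpos : (0 : ℤ) < N := by positivity
  -- integer sum facts
  have hzsum : ∑ i, z i = 0 := by
    simp only [hzdef, Finset.sum_sub_distrib, ← Finset.mul_sum, ← hSdef,
      Finset.sum_const, Finset.card_univ, Fintype.card_fin]
    push_cast [hNdef]
    ring
  have hzsq : ∑ i, z i ^ 2 = 2 * N ^ 2 := by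
    have hR : ((∑ i, z i ^ 2 : ℤ) : ℝ) = ((2 * N ^ 2 : ℤ) : ℝ) := by
      push_cast
      calc ∑ i, (z i : ℝ) ^ 2 = ∑ i, (((n : ℝ) + 1) * x i) ^ 2 :=
            Finset.sum_congr rfl fun i _ => by rw [hxz i]
        _ = ((n : ℝ) + 1) ^ 2 * ∑ i, x i ^ 2 := by
            rw [Finset.mul_sum]; exact Finset.sum_congr rfl fun i _ => by ring
        _ = 2 * ((n : ℝ) + 1) ^ 2 := by rw [hlen]; ring
        _ = 2 * (N : ℝ) ^ 2 := by push_cast [hNdef]; ring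
    exact_mod_cast hR
  set r : ℤ := z 0 % N with hrdef
  have hr0 : 0 ≤ r := Int.emod_nonneg _ (by omega)
  have hrN : r < N := Int.emod_lt_of_pos _ hNpos
  have hmodeq : ∀ i, z i % N = r := by
    intro i
    have hdvd : N ∣ z i - z 0 := ⟨m i 0 - m 0 0, by simp only [hzdef]; ring⟩
    have := Int.ModEq.symm (Int.modEq_iff_dvd.mpr (by simpa using hdvd) :
      z 0 ≡ z i [ZMOD N])
    simpa [Int.ModEq, hrdef] using this
  set q : Fin (n + 1) → ℤ := fun i => z i / N with hqdef
  have hzq : ∀ i, z i = N * q i + r := by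
    intro i
    have := Int.mul_ediv_add_emod (z i) N
    rw [hmodeq i] at this
    linarith [this]
  set c : Fin (n + 1) → ℤ := fun i => -q i with hcdef
  have hcsum : ∑ i, c i = r := by
    have h1 : (0 : ℤ) = N * (∑ i, q i + r) := by
      calc (0 : ℤ) = ∑ i, z i := hzsum.symm
        _ = ∑ i, (N * q i + r) := Finset.sum_congr rfl fun i _ => hzq i
        _ = N * ∑ i, q i + (n + 1) * r := by
            rw [Finset.sum_add_distrib, ← Finset.mul_sum, Finset.sum_const,
              Finset.card_univ, Fintype.card_fin]
            push_cast
            ring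
        _ = N * (∑ i, q i + r) := by push_cast [hNdef]; ring
    have h2 : ∑ i, q i + r = 0 := by
      rcases mul_eq_zero.mp h1.symm with h | h
      · omega
      · exact h
    simp only [hcdef, Finset.sum_neg_distrib]
    linarith [h2]
  have hcsq : N * ∑ i, c i ^ 2 = 2 * N + r ^ 2 := by
    have h1 : 2 * N ^ 2 = N * (N * ∑ i, c i ^ 2) - N * r ^ 2 := by
      calc 2 * N ^ 2 = ∑ i, z i ^ 2 := hzsq.symm
        _ = ∑ i, (N ^ 2 * c i ^ 2 - 2 * N * r * c i + r ^ 2) :=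
            Finset.sum_congr rfl fun i _ => by
              rw [hzq i]; simp only [hcdef]; ring
        _ = N ^ 2 * ∑ i, c i ^ 2 - 2 * N * r * ∑ i, c i + (n + 1) * r ^ 2 := by
            rw [Finset.sum_add_distrib, Finset.sum_sub_distrib, ← Finset.mul_sum,
              ← Finset.mul_sum, Finset.sum_const, Finset.card_univ, Fintype.card_fin]
            push_cast
            ring
        _ = N * (N * ∑ i, c i ^ 2) - N * r ^ 2 := by
            rw [hcsum]; push_cast [hNdef]; ring
    have h2 : N * (N * ∑ i, c i ^ 2 - (2 * N + r ^ 2)) = 0 := by ring_nf; ring_nf at h1; linarith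
    rcases mul_eq_zero.mp h2 with h | h
    · omega
    · linarith [h]
  -- apply the arithmetic core lemma to get r = 0
  have hrzero : r = 0 := by
    set D : ℤ := ∑ i, c i * (c i - 1) with hDdef
    have hD0 : 0 ≤ D := Finset.sum_nonneg fun i _ => by nlinarith [sq_nonneg (2 * c i - 1)]
    have hDe : Even D := by
      rw [hDdef]
      apply Finset.even_sum
      intro i _
      have h := Int.even_mul_succ_self (c i - 1)
      simpa [sub_add_cancel, mul_comm] using h
    have hkey : N * D = 2 * N + r ^ 2 - N * r := by
      have hD1 : D = ∑ i, c i ^ 2 - ∑ i, c i := by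
        rw [hDdef, ← Finset.sum_sub_distrib]
        exact Finset.sum_congr rfl fun i _ => by ring
      rw [hD1, mul_sub, hcsq, hcsum]
    exact stmt0_core N r D (by omega) hr0 hrN (by omega) (by omega) hD0 hDe hkey
  rw [hrzero] at hcsum hcsq
  have hcsq2 : ∑ i, c i ^ 2 = 2 := by
    have : N * ∑ i, c i ^ 2 = N * 2 := by linarith [hcsq]
    exact mul_left_cancel₀ (by omega) this
  -- each c i is in {-1, 0, 1}
  have hbound : ∀ i : Fin (n + 1), c i ^ 2 ≤ 2 := by
    intro i
    have h := Finset.single_le_sum (f := fun i => c i ^ 2)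
      (fun j _ => sq_nonneg (c j)) (Finset.mem_univ i)
    linarith [h, hcsq2]
  have hball : ∀ i : Fin (n + 1), -1 ≤ c i ∧ c i ≤ 1 := fun i => by
    have := hbound i; constructor <;> nlinarith [this]
  -- find j with c j = 1
  have hexj : ∃ j, c j = 1 := by
    by_contra hno
    push_neg at hno
    have hle : ∀ i ∈ Finset.univ, c i ≤ 0 := fun i _ => by
      have := hball i; have := hno i; omega
    have := (Finset.sum_eq_zero_iff_of_nonpos hle).mp hcsum
    have : ∑ i, c i ^ 2 = 0 :=
      Finset.sum_eq_zero fun i hi => by rw [this i hi]; ring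
    omega
  have hexi : ∃ i, c i = -1 := by
    by_contra hno
    push_neg at hno
    have hle : ∀ i ∈ Finset.univ, 0 ≤ c i := fun i _ => by
      have := hball i; have := hno i; omega
    have := (Finset.sum_eq_zero_iff_of_nonneg hle).mp hcsum
    have : ∑ i, c i ^ 2 = 0 :=
      Finset.sum_eq_zero fun i hi => by rw [this i hi]; ring
    omega
  obtain ⟨i, hi⟩ := hexi
  obtain ⟨j, hj⟩ := hexj
  have hij : i ≠ j := fun h => by rw [h, hj] at hi; omega
  -- all other coordinates vanish
  have hrest : ∀ k, k ≠ i → k ≠ j → c k = 0 := by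
    intro k hki hkj
    have h1 : ∑ l ∈ (Finset.univ.erase j).erase i, c l ^ 2 = 0 := by
      have e1 : ∑ l, c l ^ 2 =
          c j ^ 2 + ∑ l ∈ Finset.univ.erase j, c l ^ 2 :=
        (Finset.add_sum_erase _ _ (Finset.mem_univ j)).symm
      have e2 : ∑ l ∈ Finset.univ.erase j, c l ^ 2 =
          c i ^ 2 + ∑ l ∈ (Finset.univ.erase j).erase i, c l ^ 2 :=
        (Finset.add_sum_erase _ _ (Finset.mem_erase.mpr ⟨hij, Finset.mem_univ i⟩)).symm
      rw [e1, e2, hi, hj] at hcsq2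
      linarith [hcsq2]
    have h2 := (Finset.sum_eq_zero_iff_of_nonneg
      (fun l _ => sq_nonneg (c l))).mp h1 k
      (Finset.mem_erase.mpr ⟨hki, Finset.mem_erase.mpr ⟨hkj, Finset.mem_univ k⟩⟩)
    nlinarith [h2]
  -- x k = -(c k)
  have hxc : ∀ k, x k = -(c k : ℝ) := by
    intro k
    have h1 := hxz k
    have h2 : z k = N * (-(c k)) := by rw [hzq k, hrzero]; simp [hcdef]
    rw [h2] at h1
    have : ((N : ℝ)) * (-(c k : ℝ)) = ((n : ℝ) + 1) * x k := by exact_mod_cast h1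
    have hNcast : (N : ℝ) = (n : ℝ) + 1 := by push_cast [hNdef]; ring
    rw [hNcast] at this
    have h5 : ((n : ℝ) + 1) * x k = ((n : ℝ) + 1) * (-(c k : ℝ)) := by linarith [this]
    exact mul_left_cancel₀ hNR h5
  refine ⟨i, j, hij, funext fun k => ?_⟩
  by_cases hki : k = i
  · subst hki
    rw [hxc k]
    simp [Pi.single_apply, hij.symm, hi]
  · by_cases hkj : k = j
    · subst hkj
      rw [hxc k]
      simp [Pi.single_apply, hij, hj]
    · rw [hxc k, hrest k hki hkj]
      simp [Pi.single_apply, hki, hkj]
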